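/- Let F be a set functor and Λ an F-relator such that for all functions f : X → A and g : Y → A one has (Fg)° · Ff ≤ Λ(g° · f). Then Λ-similarity is complete: for all F-coalgebras (X,α), (Y,β) and all states x ∈ X, y ∈ Y, if x and y are behaviourally equivalent then x and y are Λ-similar. -/

import Mathlib

open CategoryTheory Function

universe u

/-- Applicative composition of relations: `relComp s r = s · r`. -/
def relComp {X Y Z : Type u} (s : Y → Z → Prop) (r : X → Y → Prop) : X → Z → Prop :=
  fun x z => ∃ y, r x y ∧ s y z

/-- Converse of a relation. -/
def relConv {X Y : Type u} (r : X → Y → Prop) : Y → X → Prop := fun y x => r x y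

/-- Graph relation of a function. -/
def fgraph {X Y : Type u} (f : X → Y) : X → Y → Prop := fun x y => f x = y

/-- An `F`-relator: a monotone assignment of relations `F X ⇸ F Y` to relations `X ⇸ Y`. -/
structure Relator (F : Type u ⥤ Type u) : Type (u + 1) where
  map : ∀ {X Y : Type u}, (X → Y → Prop) → (F.obj X → F.obj Y → Prop)
  mono : ∀ {X Y : Type u} {r s : X → Y → Prop}, (∀ x y, r x y → s x y) →
    ∀ u v, map r u v → map s u v

/-- `f` is a coalgebra homomorphism from `(X, α)` to `(Y, β)`. -/
def IsCoalgHom (F : Type u ⥤ Type u) {X Y : Type u} (α : X → F.obj X) (β : Y → F.obj Y)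
    (f : X → Y) : Prop :=
  ∀ x, β (f x) = F.map (TypeCat.ofHom f) (α x)

/-- Behavioural equivalence of states. -/
def BehEq (F : Type u ⥤ Type u) {X Y : Type u} (α : X → F.obj X) (β : Y → F.obj Y)
    (x : X) (y : Y) : Prop :=
  ∃ (Z : Type u) (γ : Z → F.obj Z) (f : X → Z) (g : Y → Z),
    IsCoalgHom F α γ f ∧ IsCoalgHom F β γ g ∧ f x = g y

/-- `r` is a `Λ`-simulation from `(X, α)` to `(Y, β)`: `r ≤ β° · Λr · α`. -/
def IsSimulation {F : Type u ⥤ Type u} (Λ : Relator F) {X Y : Type u}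
    (α : X → F.obj X) (β : Y → F.obj Y) (r : X → Y → Prop) : Prop :=
  ∀ x y, r x y → Λ.map r (α x) (β y)

/-- `x` and `y` are `Λ`-similar: related by some `Λ`-simulation. -/
def RelSimilar {F : Type u ⥤ Type u} (Λ : Relator F) {X Y : Type u}
    (α : X → F.obj X) (β : Y → F.obj Y) (x : X) (y : Y) : Prop :=
  ∃ r, IsSimulation Λ α β r ∧ r x y

/-- If an `F`-relator `Λ` satisfies `(Fg)° · Ff ≤ Λ(g° · f)` for all
functions `f : X → A`, `g : Y → A`, then `Λ`-similarity is complete: behaviourally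
equivalent states are `Λ`-similar. -/
theorem stmt0 (F : Type u ⥤ Type u) (Λ : Relator F)
    (hcomp : ∀ {X Y A : Type u} (f : X → A) (g : Y → A) (u : F.obj X) (v : F.obj Y),
      F.map (TypeCat.ofHom f) u = F.map (TypeCat.ofHom g) v → Λ.map (fun x y => f x = g y) u v)
    {X Y : Type u} (α : X → F.obj X) (β : Y → F.obj Y) (x : X) (y : Y)
    (h : BehEq F α β x y) : RelSimilar Λ α β x y := by
  obtain ⟨Z, γ, f, g, hf, hg, hxy⟩ := h
  refine ⟨fun x y => f x = g y, ?_, hxy⟩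
  intro a b hab
  exact hcomp f g (α a) (β b) (by rw [← hf, ← hg, hab])
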